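/- Let M be a matroid with ground set partitioned as E = C ∪ X ∪ D (disjoint), and let W' ⊆ X. Then W' is a union of circuits of the minor M' = M / C \ D if and only if there exists a union of circuits W of M with W' ⊆ W ⊆ W' ∪ C. -/

import Mathlib

open Set

namespace Matroid

variable {α : Type*}

/-- A circuit of a matroid is a minimal dependent set. -/
def Circuit (M : Matroid α) (C : Set α) : Prop :=
  M.Dep C ∧ ∀ D, M.Dep D → D ⊆ C → D = C

/-- A cocircuit is a circuit of the dual matroid. -/
def Cocircuit (M : Matroid α) (D : Set α) : Prop := M✶.Circuit D

/-- The matroid obtained by deleting the set `D`. -/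
def delete' (M : Matroid α) (D : Set α) : Matroid α := M ↾ (M.E \ D)

/-- The matroid obtained by contracting the set `C`. -/
def contract' (M : Matroid α) (C : Set α) : Matroid α := ((M✶).delete' C)✶

/-- `N` is a minor of `M` if it is obtained from `M` by contracting a set `C`
and deleting a set `D`, where `C` and `D` are disjoint subsets of the ground set. -/
def IsMinor' (N M : Matroid α) : Prop :=
  ∃ C D, Disjoint C D ∧ C ∪ D ⊆ M.E ∧ N = (M.contract' C).delete' D

/-- A scrawl is a union of circuits. -/
def Scrawl (M : Matroid α) (W : Set α) : Prop :=
  ∃ S : Set (Set α), (∀ C ∈ S, M.Circuit C) ∧ W = ⋃₀ S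

/-- A matroid is tame if every circuit-cocircuit intersection is finite. -/
def Tame (M : Matroid α) : Prop :=
  ∀ C D, M.Circuit C → M.Cocircuit D → (C ∩ D).Finite

/-- A `k`-painting of a matroid: nonzero coefficients on each circuit and each
cocircuit such that each circuit-cocircuit pair is "orthogonal". -/
def IsPainting {k : Type*} [Field k] (M : Matroid α)
    (c : Set α → α → k) (d : Set α → α → k) : Prop :=
  (∀ C, M.Circuit C → ∀ e ∈ C, c C e ≠ 0) ∧
  (∀ D, M.Cocircuit D → ∀ e ∈ D, d D e ≠ 0) ∧
  (∀ C D, M.Circuit C → M.Cocircuit D →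
    (C ∩ D).Finite ∧ ∑ᶠ e ∈ C ∩ D, c C e * d D e = 0)

end Matroid

namespace Matroid

variable {α : Type*} {M : Matroid α} {K C I Y W R : Set α} {e : α}

lemma Circuit.nonempty' (hK : M.Circuit K) : K.Nonempty := by
  rw [nonempty_iff_ne_empty]
  rintro rfl
  exact hK.1.not_indep M.empty_indep

lemma Circuit.diff_singleton_indep (hK : M.Circuit K) (he : e ∈ K) : M.Indep (K \ {e}) := by
  by_contra h
  have hd : M.Dep (K \ {e}) := ⟨h, diff_subset.trans hK.1.subset_ground⟩
  have h2 := hK.2 _ hd diff_subset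
  rw [← h2] at he
  exact he.2 rfl

lemma Circuit.mem_closure_diff_singleton (hK : M.Circuit K) (he : e ∈ K) :
    e ∈ M.closure (K \ {e}) := by
  by_contra h
  have hi := hK.diff_singleton_indep he
  have hind : M.Indep (insert e (K \ {e})) := by
    rw [hi.insert_indep_iff_of_notMem (fun h' => h'.2 rfl)]
    exact ⟨hK.1.subset_ground he, h⟩
  rw [insert_diff_singleton, insert_eq_of_mem he] at hind
  exact hK.1.not_indep hind

lemma Indep.exists_circuit_of_mem_closure (hI : M.Indep I) (he : e ∈ M.closure I)
    (heI : e ∉ I) : ∃ K, M.Circuit K ∧ e ∈ K ∧ K ⊆ insert e I := by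
  classical
  set J := {x ∈ I | e ∉ M.closure (I \ {x})} with hJdef
  have hJI : J ⊆ I := sep_subset _ _
  have heE : e ∈ M.E := M.closure_subset_ground I he
  have heJ : e ∈ M.closure J := by
    rcases eq_empty_or_nonempty (I \ J) with h0 | hne
    · have hIJ : I ⊆ J := by rwa [diff_eq_empty] at h0
      exact M.closure_subset_closure hIJ he
    · set Js : Set (Set α) := (fun x => I \ {x}) '' (I \ J) with hJs_def
      have hJs : Js.Nonempty := hne.image _
      have hsub : ∀ A ∈ Js, A ⊆ I := by rintro A ⟨x, -, rfl⟩; exact diff_subset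
      have hsInter : ⋂₀ Js = J := by
        apply subset_antisymm
        · intro y hy
          rw [mem_sInter] at hy
          by_cases hyI : y ∈ I
          · by_contra hyJ
            have := hy _ ⟨y, ⟨hyI, hyJ⟩, rfl⟩
            exact this.2 rfl
          · obtain ⟨x, hx⟩ := hne
            have := hy _ ⟨x, hx, rfl⟩
            exact absurd this.1 hyI
        · intro y hy
          rw [mem_sInter]
          rintro A ⟨x, hx, rfl⟩
          exact ⟨hJI hy, fun h => hx.2 (h ▸ hy)⟩
      have hclos := hI.closure_sInter_eq_biInter_closure_of_forall_subset hJs hsub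
      rw [hsInter] at hclos
      rw [hclos, mem_iInter₂]
      rintro A ⟨x, hx, rfl⟩
      by_contra h
      exact hx.2 ⟨hx.1, h⟩
  refine ⟨insert e J, ⟨?_, ?_⟩, mem_insert _ _, insert_subset_insert hJI⟩
  · exact (hI.subset hJI).insert_dep_iff.mpr ⟨heJ, fun h => heI (hJI h)⟩
  · rintro D hD hDK
    by_cases heD : e ∈ D
    · refine subset_antisymm hDK (insert_subset heD fun x hx => ?_)
      by_contra hxD
      have hDsub : D ⊆ insert e (I \ {x}) := by
        intro y hy
        rcases hDK hy with rfl | hyJ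
        · exact mem_insert _ _
        · exact mem_insert_of_mem _ ⟨hJI hyJ, fun h => hxD (h ▸ hy)⟩
      have hind : M.Indep (insert e (I \ {x})) := by
        rw [(hI.subset diff_subset).insert_indep_iff_of_notMem (fun h => heI h.1)]
        exact ⟨heE, hx.2⟩
      exact hD.not_indep (hind.subset hDsub)
    · have hDJ : D ⊆ J := fun y hy =>
        ((hDK hy).resolve_left (fun h => heD (h ▸ hy)))
      exact absurd (hI.subset (hDJ.trans hJI)) hD.not_indep

lemma exists_circuit_of_mem_closure' (he : e ∈ M.closure Y) (heY : e ∉ Y) :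
    ∃ K, M.Circuit K ∧ e ∈ K ∧ K ⊆ insert e Y := by
  obtain ⟨I, hI⟩ := M.exists_isBasis' Y
  rw [← hI.closure_eq_closure] at he
  obtain ⟨K, hK, heK, hKs⟩ :=
    hI.indep.exists_circuit_of_mem_closure he (fun h => heY (hI.subset h))
  exact ⟨K, hK, heK, hKs.trans (insert_subset_insert hI.subset)⟩

lemma scrawl_iff_forall : M.Scrawl W ↔ ∀ e ∈ W, ∃ K, M.Circuit K ∧ e ∈ K ∧ K ⊆ W := by
  constructor
  · rintro ⟨S, hS, rfl⟩ e he
    obtain ⟨K, hKS, heK⟩ := he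
    exact ⟨K, hS K hKS, heK, subset_sUnion_of_mem hKS⟩
  · intro h
    refine ⟨{K | M.Circuit K ∧ K ⊆ W}, fun K hK => hK.1, subset_antisymm ?_ ?_⟩
    · intro e he
      obtain ⟨K, hK, heK, hKW⟩ := h e he
      exact ⟨K, ⟨hK, hKW⟩, heK⟩
    · exact sUnion_subset fun K hK => hK.2

lemma restrict_circuit_iff' (hR : R ⊆ M.E) : (M ↾ R).Circuit K ↔ M.Circuit K ∧ K ⊆ R := by
  have hdep : ∀ X, (M ↾ R).Dep X ↔ M.Dep X ∧ X ⊆ R := by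
    intro X
    rw [restrict_dep_iff, dep_iff]
    constructor
    · rintro ⟨h1, h2⟩; exact ⟨⟨h1, h2.trans hR⟩, h2⟩
    · rintro ⟨⟨h1, _⟩, h2⟩; exact ⟨h1, h2⟩
  constructor
  · rintro ⟨h1, h2⟩
    rw [hdep] at h1
    exact ⟨⟨h1.1, fun D hD hDK => h2 D ((hdep D).mpr ⟨hD, hDK.trans h1.2⟩) hDK⟩, h1.2⟩
  · rintro ⟨⟨h1, h2⟩, h3⟩
    exact ⟨(hdep K).mpr ⟨h1, h3⟩, fun D hD hDK => h2 D ((hdep D).mp hD).1 hDK⟩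

lemma contract_ground' (M : Matroid α) (C : Set α) : (M.contract' C).E = M.E \ C := rfl

lemma contract_indep_iff' (hC : C ⊆ M.E) :
    (M.contract' C).Indep I ↔ I ⊆ M.E \ C ∧ ∃ J, M.IsBasis J C ∧ M.Indep (I ∪ J) := by
  have hCd : C ⊆ M✶.E := hC
  rw [Matroid.contract', Matroid.delete', dual_indep_iff_exists']
  simp only [restrict_ground_eq, dual_ground]
  constructor
  · rintro ⟨hIE, B', hB', hIB'⟩
    rw [isBase_restrict_iff'] at hB'
    replace hB' := (isBasis'_iff_isBasis (show M.E \ C ⊆ M✶.E from diff_subset)).mp hB'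
    obtain ⟨B₁, hB₁, hB'eq⟩ := hB'.exists_isBase
    have hB₀ : M.IsBase (M.E \ B₁) := hB₁.compl_isBase_of_dual
    have hbasis : M.IsBasis ((M.E \ B₁) ∩ C) C := by
      have h := hB₁.compl_inter_isBasis_of_inter_isBasis (hB'eq ▸ hB')
      rwa [dual_dual, dual_ground, diff_diff_cancel_left hC] at h
    refine ⟨hIE, _, hbasis, (hB₀.indep.subset (union_subset ?_ inter_subset_left))⟩
    intro x hx
    refine ⟨(hIE hx).1, fun hxB₁ => ?_⟩
    have : x ∈ B' := hB'eq ▸ ⟨hxB₁, hIE hx⟩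
    exact (disjoint_left.mp hIB' hx) this
  · rintro ⟨hIE, J, hJ, hIJ⟩
    have hX : (M.E \ C) ∪ J ⊆ M.E := union_subset diff_subset hJ.indep.subset_ground
    obtain ⟨B₀, hB₀b, hIJB₀⟩ :=
      hIJ.subset_isBasis_of_subset (union_subset_union hIE Subset.rfl) hX
    have hB₀ : M.IsBase B₀ := by
      refine hB₀b.indep.isBase_of_ground_subset_closure ?_
      rw [hB₀b.closure_eq_closure]
      intro x hx
      by_cases hxC : x ∈ C
      · exact M.closure_subset_closure (subset_union_right) (hJ.subset_closure hxC)
      · exact M.subset_closure _ hX (Or.inl ⟨hx, hxC⟩)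
    have hJB₀ : J ⊆ B₀ := subset_union_right.trans hIJB₀
    have hB₀C : B₀ ∩ C = J := by
      apply subset_antisymm
      · rintro x ⟨hxB, hxC⟩
        rcases hB₀b.subset hxB with h | h
        · exact absurd hxC h.2
        · exact h
      · exact subset_inter hJB₀ hJ.subset
    have hbdual : M✶.IsBasis ((M.E \ B₀) ∩ (M.E \ C)) (M.E \ C) :=
      (hB₀.inter_isBasis_iff_compl_inter_isBasis_dual hC).mp (by rw [hB₀C]; exact hJ)
    refine ⟨hIE, (M.E \ B₀) ∩ (M.E \ C), ?_, ?_⟩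
    · rw [isBase_restrict_iff']
      exact (isBasis'_iff_isBasis (show M.E \ C ⊆ M✶.E from diff_subset)).mpr hbdual
    · have hIB₀ : I ⊆ B₀ := subset_union_left.trans hIJB₀
      exact disjoint_left.mpr fun x hx hx2 => hx2.1.2 (hIB₀ hx)

lemma contract_closure_subset' (hC : C ⊆ M.E) (hY : Y ⊆ M.E) :
    (M.contract' C).closure Y ⊆ M.closure (Y ∪ C) := by
  obtain ⟨I, hI⟩ := (M.contract' C).exists_isBasis' Y
  rw [← hI.closure_eq_closure]
  obtain ⟨hIE, J, hJ, hIJ⟩ := (contract_indep_iff' hC).mp hI.indep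
  intro e he
  have heE : e ∈ (M.contract' C).E := (M.contract' C).closure_subset_ground _ he
  rw [contract_ground'] at heE
  by_cases heI : e ∈ I
  · exact M.subset_closure (Y ∪ C) (union_subset (hY) hC) (Or.inl (hI.subset heI))
  · have hdepN : (M.contract' C).Dep (insert e I) :=
      hI.indep.insert_dep_iff.mpr ⟨he, heI⟩
    have hni : ¬ M.Indep (insert e (I ∪ J)) := by
      intro h
      refine hdepN.not_indep ((contract_indep_iff' hC).mpr
        ⟨insert_subset heE hIE, J, hJ, by rwa [insert_union]⟩)
    have hdep : M.Dep (insert e (I ∪ J)) :=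
      ⟨hni, insert_subset heE.1 (union_subset (hIE.trans diff_subset) hJ.indep.subset_ground)⟩
    have hmem := hIJ.insert_dep_iff.mp hdep
    exact M.closure_subset_closure (union_subset_union (hI.subset) hJ.subset) hmem.1

lemma mem_contract_closure' (hC : C ⊆ M.E) (hY : Y ⊆ M.E \ C)
    (he : e ∈ M.closure (Y ∪ C)) (heC : e ∉ C) (heY : e ∉ Y) :
    e ∈ (M.contract' C).closure Y := by
  obtain ⟨I, hI⟩ := (M.contract' C).exists_isBasis' Y
  rw [← hI.closure_eq_closure]
  have heE : e ∈ M.E := M.closure_subset_ground _ he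
  have heI : e ∉ I := fun h => heY (hI.subset h)
  rw [hI.indep.mem_closure_iff_of_notMem heI, dep_iff, contract_ground']
  refine ⟨?_, insert_subset ⟨heE, heC⟩ (hI.subset.trans hY)⟩
  intro hind
  obtain ⟨hIE', J, hJ, hIJ⟩ := (contract_indep_iff' hC).mp hind
  have hIJ' : M.Indep (I ∪ J) := hIJ.subset (union_subset_union (subset_insert _ _) Subset.rfl)
  have hclJC : M.closure (I ∪ J) = M.closure (I ∪ C) := by
    rw [← closure_union_closure_right_eq, hJ.closure_eq_closure,
      closure_union_closure_right_eq]
  have hclIC : M.closure (Y ∪ C) ⊆ M.closure (I ∪ J) := by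
    apply closure_subset_closure_of_subset_closure
    apply union_subset
    · intro y hy
      have h1 : y ∈ (M.contract' C).closure I := by
        rw [hI.closure_eq_closure]
        exact (M.contract' C).subset_closure Y (by rw [contract_ground']; exact hY) hy
      have h2 := contract_closure_subset' hC (hI.subset.trans (hY.trans diff_subset)) h1
      rw [← hclJC] at h2
      exact h2
    · intro x hx
      rw [hclJC]
      exact M.subset_closure _ (union_subset (hI.subset.trans (hY.trans diff_subset)) hC)
        (Or.inr hx)
  have hecl : e ∈ M.closure (I ∪ J) := hclIC he
  have heIJ : e ∉ I ∪ J := by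
    rintro (h | h)
    · exact heI h
    · exact heC (hJ.subset h)
  have hdep : M.Dep (insert e (I ∪ J)) := hIJ'.insert_dep_iff.mpr ⟨hecl, heIJ⟩
  exact hdep.not_indep (by rwa [insert_union] at hIJ)

lemma exists_contract_circuit_of_mem (hC : C ⊆ M.E) (hK : M.Circuit K) (he : e ∈ K \ C) :
    ∃ K', (M.contract' C).Circuit K' ∧ e ∈ K' ∧ K' ⊆ K \ C := by
  have hKE := hK.1.subset_ground
  have h1 : e ∈ M.closure (((K \ C) \ {e}) ∪ C) := by
    refine M.closure_subset_closure ?_ (hK.mem_closure_diff_singleton he.1)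
    intro x hx
    by_cases hxC : x ∈ C
    · exact Or.inr hxC
    · exact Or.inl ⟨⟨hx.1, hxC⟩, hx.2⟩
  have h2 : e ∈ (M.contract' C).closure ((K \ C) \ {e}) :=
    mem_contract_closure' hC (fun x hx => ⟨hKE hx.1.1, hx.1.2⟩) h1 he.2 (fun h => h.2 rfl)
  obtain ⟨K', hK', heK', hsub⟩ := exists_circuit_of_mem_closure' h2 (fun h => h.2 rfl)
  rw [insert_diff_singleton, insert_eq_of_mem he] at hsub
  exact ⟨K', hK', heK', hsub⟩

lemma contract_circuit_exists_circuit (hC : C ⊆ M.E) {C' : Set α}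
    (hC' : (M.contract' C).Circuit C') : ∃ K, M.Circuit K ∧ C' ⊆ K ∧ K ⊆ C' ∪ C := by
  obtain ⟨e, he⟩ := hC'.nonempty'
  have hC'E : C' ⊆ M.E \ C := by
    have := hC'.1.subset_ground
    rwa [contract_ground'] at this
  have h1 : e ∈ (M.contract' C).closure (C' \ {e}) := hC'.mem_closure_diff_singleton he
  have h2 : e ∈ M.closure ((C' \ {e}) ∪ C) :=
    contract_closure_subset' hC (diff_subset.trans (hC'E.trans diff_subset)) h1
  have heC : e ∉ C := (hC'E he).2
  have heY : e ∉ (C' \ {e}) ∪ C := by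
    rintro (h | h)
    · exact h.2 rfl
    · exact heC h
  obtain ⟨K, hK, heK, hsub⟩ := exists_circuit_of_mem_closure' h2 heY
  have hKsub : K ⊆ C' ∪ C := by
    refine hsub.trans ?_
    rintro x (rfl | hx)
    · exact Or.inl he
    · rcases hx with h | h
      · exact Or.inl h.1
      · exact Or.inr h
  obtain ⟨C'', hC'', heC'', hC''sub⟩ := exists_contract_circuit_of_mem hC hK ⟨heK, heC⟩
  have hsub2 : C'' ⊆ C' := hC''sub.trans (fun x hx => (hKsub hx.1).resolve_right hx.2)
  have hEq : C'' = C' := hC'.2 _ hC''.1 hsub2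
  refine ⟨K, hK, ?_, hKsub⟩
  rw [← hEq]
  exact hC''sub.trans diff_subset

end Matroid

/-- A subset of `X` is a union of circuits of the minor `M / C \ D` iff there is a union
of circuits of `M` squeezed between it and its union with `C`. -/
theorem stmt6 {α : Type*} (M : Matroid α) (C X D : Set α)
    (hCX : Disjoint C X) (hCD : Disjoint C D) (hXD : Disjoint X D)
    (hE : M.E = C ∪ X ∪ D) (W' : Set α) (hW' : W' ⊆ X) :
    ((M.contract' C).delete' D).Scrawl W' ↔
      ∃ W, M.Scrawl W ∧ W' ⊆ W ∧ W ⊆ W' ∪ C := by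
  have hCE : C ⊆ M.E := by rw [hE]; exact subset_union_left.trans subset_union_left
  set N := M.contract' C with hN
  have hNE : N.E = M.E \ C := Matroid.contract_ground' M C
  have hXN : X ⊆ N.E \ D := by
    intro x hx
    refine ⟨⟨?_, fun h => (disjoint_left.mp hCX h) hx⟩, fun h => (disjoint_left.mp hXD hx) h⟩
    · show x ∈ M.E
      rw [hE]; exact Or.inl (Or.inr hx)
  have hRE : N.E \ D ⊆ N.E := diff_subset
  rw [Matroid.delete']
  constructor
  · intro hW
    rw [Matroid.scrawl_iff_forall] at hW
    choose K' hK' heK' hK'W using hW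
    have hK'N : ∀ e he, N.Circuit (K' e he) ∧ K' e he ⊆ N.E \ D :=
      fun e he => (Matroid.restrict_circuit_iff' hRE).mp (hK' e he)
    have hKex : ∀ e he, ∃ K, M.Circuit K ∧ K' e he ⊆ K ∧ K ⊆ K' e he ∪ C :=
      fun e he => Matroid.contract_circuit_exists_circuit hCE (hK'N e he).1
    choose K hK hK1 hK2 using hKex
    refine ⟨⋃ e, ⋃ he : e ∈ W', K e he, ?_, ?_, ?_⟩
    · rw [Matroid.scrawl_iff_forall]
      intro f hf
      simp only [mem_iUnion] at hf
      obtain ⟨e, he, hfe⟩ := hf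
      refine ⟨K e he, hK e he, hfe, fun x hx => ?_⟩
      simp only [mem_iUnion]
      exact ⟨e, he, hx⟩
    · intro e he
      simp only [mem_iUnion]
      exact ⟨e, he, hK1 e he (heK' e he)⟩
    · intro f hf
      simp only [mem_iUnion] at hf
      obtain ⟨e, he, hfe⟩ := hf
      rcases hK2 e he hfe with h | h
      · exact Or.inl (hK'W e he h)
      · exact Or.inr h
  · rintro ⟨W, hW, hW'W, hWW'C⟩
    rw [Matroid.scrawl_iff_forall] at hW ⊢
    intro e he
    obtain ⟨K, hK, heK, hKW⟩ := hW e (hW'W he)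
    have heX : e ∈ X := hW' he
    have heC : e ∉ C := fun h => (disjoint_left.mp hCX h) heX
    obtain ⟨C'', hC'', heC'', hC''sub⟩ :=
      Matroid.exists_contract_circuit_of_mem hCE hK ⟨heK, heC⟩
    have hC''W' : C'' ⊆ W' := by
      intro x hx
      have hxK := hC''sub hx
      rcases hWW'C (hKW hxK.1) with h | h
      · exact h
      · exact absurd h hxK.2
    exact ⟨C'', (Matroid.restrict_circuit_iff' hRE).mpr
      ⟨hC'', hC''W'.trans (hW'.trans hXN)⟩, heC'', hC''W'⟩
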